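/- Let k be a field, A = k[a_1,a_2], p ≥ 5 an odd integer, x_1 = a_1^p, x_2 = a_2^p, y = a_1^2 a_2^{p-2}. Let φ : A[X_1,X_2,Y] → A[t] be the A-algebra map sending X_1 ↦ x_1 t, X_2 ↦ x_2 t, Y ↦ y t. Then ker φ is the ideal of A[X_1,X_2,Y] generated by: F_1 = a_1^{p-2}Y − a_2^{p-2}X_1 and G_1 = a_2^2 Y − a_1^2 X_2 (degree 1); F_n = a_1^{p-2n}Y^n − a_2^{p-2n}X_1 X_2^{n-1} for 2 ≤ n ≤ (p-1)/2; F_{(p+1)/2} = a_2 Y^{(p+1)/2} − a_1 X_1 X_2^{(p-1)/2}; and F_p = Y^p − X_1^2 X_2^{p-2}. -/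

import Mathlib

namespace Stmt12
open MvPolynomial

variable {k : Type*} [Field k]

noncomputable def F5 (v : Fin 5 → ℕ) : Fin 5 →₀ ℕ := Finsupp.equivFunOnFinite.symm v
noncomputable def F3 (v : Fin 3 → ℕ) : Fin 3 →₀ ℕ := Finsupp.equivFunOnFinite.symm v

noncomputable def mk (k : Type*) [Field k] (v : Fin 5 → ℕ) : MvPolynomial (Fin 5) k := monomial (F5 v) 1
noncomputable def mk3 (k : Type*) [Field k] (v : Fin 3 → ℕ) : MvPolynomial (Fin 3) k := monomial (F3 v) 1

lemma F5_add (a b : Fin 5 → ℕ) : F5 (a + b) = F5 a + F5 b := by ext i; simp [F5]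

lemma F5_inj : Function.Injective F5 := fun a b h => by
  simpa using Finsupp.equivFunOnFinite.symm.injective h

lemma F3_inj : Function.Injective F3 := fun a b h => by
  simpa using Finsupp.equivFunOnFinite.symm.injective h

lemma mk_mul (a b : Fin 5 → ℕ) : mk k a * mk k b = mk k (a + b) := by
  simp [mk, monomial_mul, F5_add]

lemma mk_pow (a : Fin 5 → ℕ) (n : ℕ) : mk k a ^ n = mk k (fun i => n * a i) := by
  have h : n • F5 a = F5 (fun i => n * a i) := by ext i; simp [F5]
  rw [mk, monomial_pow, one_pow, h, mk]

lemma mk_eq_prod (v : Fin 5 → ℕ) :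
    mk k v = X 0 ^ v 0 * X 1 ^ v 1 * X 2 ^ v 2 * X 3 ^ v 3 * X 4 ^ v 4 := by
  rw [mk, monomial_eq, C_1, one_mul, Finsupp.prod_fintype _ _ (fun i => pow_zero _),
    Fin.prod_univ_five]
  rfl

lemma mk3_eq_prod (v : Fin 3 → ℕ) :
    mk3 k v = X 0 ^ v 0 * X 1 ^ v 1 * X 2 ^ v 2 := by
  rw [mk3, monomial_eq, C_1, one_mul, Finsupp.prod_fintype _ _ (fun i => pow_zero _),
    Fin.prod_univ_three]
  rfl

lemma F3_add (a b : Fin 3 → ℕ) : F3 (a + b) = F3 a + F3 b := by ext i; simp [F3]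

lemma mk3_mul (a b : Fin 3 → ℕ) : mk3 k a * mk3 k b = mk3 k (a + b) := by
  simp [mk3, monomial_mul, F3_add]

lemma mk3_pow (a : Fin 3 → ℕ) (n : ℕ) : mk3 k a ^ n = mk3 k (fun i => n * a i) := by
  have h : n • F3 a = F3 (fun i => n * a i) := by ext i; simp [F3]
  rw [mk3, monomial_pow, one_pow, h, mk3]

/-- the weight map: coordinates of target are (t, a₁, a₂);
coordinates of source are (X₁, X₂, Y, a₁, a₂) -/
def Φ (p : ℕ) (v : Fin 5 → ℕ) : Fin 3 → ℕ :=
  ![v 0 + v 1 + v 2, p * v 0 + 2 * v 2 + v 3, p * v 1 + (p-2) * v 2 + v 4]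

noncomputable def ψ (k : Type*) [Field k] (p : ℕ) :
    MvPolynomial (Fin 5) k →ₐ[k] MvPolynomial (Fin 3) k :=
  aeval ![X 1 ^ p * X 0, X 2 ^ p * X 0, X 0 * X 1 ^ 2 * X 2 ^ (p-2), X 1, X 2]

lemma ψ_mk (p : ℕ) (v : Fin 5 → ℕ) : ψ k p (mk k v) = mk3 k (Φ p v) := by
  rw [mk_eq_prod]
  simp only [ψ, map_mul, map_pow, aeval_X]
  simp only [Matrix.cons_val_zero, Matrix.cons_val_one, Matrix.head_cons,
    Matrix.cons_val_two, Matrix.tail_cons, Matrix.cons_val_three, Matrix.cons_val_four]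
  have h0 : (X 0 : MvPolynomial (Fin 3) k) = mk3 k ![1,0,0] := by rw [mk3_eq_prod]; simp
  have h1 : (X 1 : MvPolynomial (Fin 3) k) = mk3 k ![0,1,0] := by rw [mk3_eq_prod]; simp
  have h2 : (X 2 : MvPolynomial (Fin 3) k) = mk3 k ![0,0,1] := by rw [mk3_eq_prod]; simp
  rw [h0, h1, h2]
  simp only [mk3_pow, mk3_mul]
  congr 1
  funext r
  fin_cases r <;> simp [Φ, Matrix.vecHead, Matrix.vecTail] <;> ring

lemma Φ_add (p : ℕ) (a b : Fin 5 → ℕ) : Φ p (a + b) = Φ p a + Φ p b := by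
  funext r
  fin_cases r <;> simp [Φ] <;> ring

lemma vadd5 (a0 a1 a2 a3 a4 b0 b1 b2 b3 b4 : ℕ) :
    ![a0,a1,a2,a3,a4] + ![b0,b1,b2,b3,b4] = ![a0+b0,a1+b1,a2+b2,a3+b3,a4+b4] := by
  funext i; fin_cases i <;> rfl

section Gens
variable (k)
variable (p m : ℕ)

noncomputable def gF (n : ℕ) : MvPolynomial (Fin 5) k :=
  mk k ![0,0,n,p-2*n,0] - mk k ![1,n-1,0,0,p-2*n]
noncomputable def gG : MvPolynomial (Fin 5) k := mk k ![0,0,1,0,2] - mk k ![0,1,0,2,0]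
noncomputable def gM : MvPolynomial (Fin 5) k := mk k ![0,0,m+1,0,1] - mk k ![1,m,0,1,0]
noncomputable def gP : MvPolynomial (Fin 5) k := mk k ![0,0,p,0,0] - mk k ![2,p-2,0,0,0]

noncomputable def S' : Set (MvPolynomial (Fin 5) k) :=
  {gF k p 1, gG k, gM k m, gP k p} ∪ (gF k p) '' Set.Icc 2 m

noncomputable def J : Ideal (MvPolynomial (Fin 5) k) := Ideal.span (S' k p m)

end Gens

section Main
variable (p m : ℕ) (hp : p = 2*m+1) (hm : 2 ≤ m)
include hp hm

lemma ΦgF {n : ℕ} (h1 : 1 ≤ n) (h2 : n ≤ m) :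
    Φ p ![0,0,n,p-2*n,0] = Φ p ![1,n-1,0,0,p-2*n] := by
  obtain ⟨b, rfl⟩ : ∃ b, n = b + 1 := ⟨n - 1, by omega⟩
  obtain ⟨a, ha⟩ : ∃ a, p = 2*(b+1) + a := ⟨p - 2*(b+1), by omega⟩
  have e1 : p - 2*(b+1) = a := by omega
  have e2 : p - 2 = 2*b + a := by omega
  funext r
  fin_cases r <;> simp [Φ, e1, e2] <;> (try rw [ha]) <;> ring

lemma ΦgG : Φ p ![0,0,1,0,2] = Φ p ![0,1,0,2,0] := by
  have e2 : p - 2 + 2 = p := by omega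
  funext r
  fin_cases r <;> simp [Φ] <;> omega

lemma ΦgM : Φ p ![0,0,m+1,0,1] = Φ p ![1,m,0,1,0] := by
  have e2 : p - 2 = 2*m - 1 := by omega
  obtain ⟨c, rfl⟩ : ∃ c, m = c + 2 := ⟨m - 2, by omega⟩
  subst hp
  have e3 : 2*(c+2)+1 - 2 = 2*c + 3 := by omega
  funext r
  fin_cases r <;> simp [Φ, e3] <;> ring

lemma ΦgP : Φ p ![0,0,p,0,0] = Φ p ![2,p-2,0,0,0] := by
  obtain ⟨c, rfl⟩ : ∃ c, p = c + 2 := ⟨p - 2, by omega⟩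
  have e3 : c + 2 - 2 = c := by omega
  funext r
  fin_cases r <;> simp [Φ, e3] <;> ring

lemma ΦK : Φ p ![1,0,0,0,p] = Φ p ![0,1,0,p,0] := by
  funext r
  fin_cases r <;> simp [Φ]

end Main

section Membership
variable {p m : ℕ}

lemma gF_mem {n : ℕ} (h1 : 1 ≤ n) (h2 : n ≤ m) : gF k p n ∈ J k p m := by
  apply Ideal.subset_span
  rcases eq_or_lt_of_le h1 with h | h
  · exact Or.inl (by left; rw [← h])
  · exact Or.inr ⟨n, ⟨by omega, h2⟩, rfl⟩

lemma gG_mem : gG k ∈ J k p m :=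
  Ideal.subset_span (Or.inl (by right; left; rfl))

lemma gM_mem : gM k m ∈ J k p m :=
  Ideal.subset_span (Or.inl (by right; right; left; rfl))

lemma gP_mem : gP k p ∈ J k p m :=
  Ideal.subset_span (Or.inl (by right; right; right; rfl))

lemma move {gL gR : Fin 5 → ℕ} (h : mk k gL - mk k gR ∈ J k p m) (r : Fin 5 → ℕ) :
    mk k (r + gL) - mk k (r + gR) ∈ J k p m := by
  have h2 := Ideal.mul_mem_left _ (mk k r) h
  rwa [mul_sub, mk_mul, mk_mul] at h2

lemma move' {gL gR : Fin 5 → ℕ} (h : mk k gL - mk k gR ∈ J k p m) (r : Fin 5 → ℕ) :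
    mk k (r + gR) - mk k (r + gL) ∈ J k p m := by
  have h2 := (J k p m).neg_mem (move h r)
  rwa [neg_sub] at h2

lemma K_mem (hp : p = 2*m+1) (hm : 2 ≤ m) :
    mk k ![1,0,0,0,p] - mk k ![0,1,0,p,0] ∈ J k p m := by
  have hgg : mk k ![0,0,1,0,2] - mk k ![0,1,0,2,0] ∈ J k p m := gG_mem
  have hgf : mk k ![0,0,1,p-2,0] - mk k ![1,0,0,0,p-2] ∈ J k p m := by
    have h := gF_mem (k := k) (p := p) (m := m) (n := 1) (by norm_num) (by omega)
    rw [gF] at h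
    norm_num at h
    exact h
  have h1 := move hgg ![0,0,0,p-2,0]
  have h2 := move hgf ![0,0,0,0,2]
  have hc : p - 2 + 2 = p := by omega
  have hc2 : 2 + (p - 2) = p := by omega
  simp only [vadd5] at h1 h2
  norm_num [hc, hc2] at h1 h2
  have h3 := (J k p m).sub_mem h1 h2
  have h4 : mk k ![0,0,1,p-2,2] - mk k ![0,1,0,p,0] - (mk k ![0,0,1,p-2,2] - mk k ![1,0,0,0,p])
      = mk k ![1,0,0,0,p] - mk k ![0,1,0,p,0] := by ring
  rwa [h4] at h3

end Membership

section LemC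
variable {p m : ℕ}

lemma lemC1 (hp : p = 2*m+1) (hm : 2 ≤ m) :
    ∀ Δ (e e' : Fin 5 → ℕ), Φ p e = Φ p e' → e 2 = e' 2 → e 0 + Δ = e' 0 →
      mk k e - mk k e' ∈ J k p m := by
  intro Δ
  induction Δ with
  | zero =>
    intro e e' hΦ h2 h0
    have ht := congrFun hΦ 0
    have ha1 := congrFun hΦ 1
    have ha2 := congrFun hΦ 2
    simp only [Φ, Matrix.cons_val_zero, Matrix.cons_val_one, Matrix.head_cons,
      Matrix.cons_val_two, Matrix.tail_cons] at ht ha1 ha2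
    have h0' : e 0 = e' 0 := by omega
    rw [h0', h2] at ht ha1
    rw [h2] at ha2
    have h1 : e 1 = e' 1 := by omega
    rw [h1] at ha2
    have h3 : e 3 = e' 3 := by
      generalize p * e' 0 = A at ha1; omega
    have h4 : e 4 = e' 4 := by
      generalize p * e' 1 = A at ha2
      generalize (p-2) * e' 2 = B at ha2
      omega
    have he : e = e' := by funext i; fin_cases i <;> assumption
    rw [he, sub_self]
    exact (J k p m).zero_mem
  | succ Δ ih =>
    intro e e' hΦ h2 h0
    have ht := congrFun hΦ 0
    have ha1 := congrFun hΦ 1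
    simp only [Φ, Matrix.cons_val_zero, Matrix.cons_val_one, Matrix.head_cons,
      Matrix.cons_val_two, Matrix.tail_cons] at ht ha1
    have he1 : e' 1 + (Δ + 1) ≤ e 1 := by omega
    have hpe : p * e' 0 = p * e 0 + p * (Δ+1) := by rw [← h0]; ring
    have he3 : e 3 = e' 3 + p * (Δ+1) := by
      rw [hpe, h2] at ha1
      generalize p * e 0 = A at ha1
      generalize p * (Δ+1) = B at ha1
      omega
    have he3' : p ≤ e 3 := by
      have : p ≤ p * (Δ+1) := Nat.le_mul_of_pos_right p (by omega)
      omega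
    set r : Fin 5 → ℕ := ![e 0, e 1 - 1, e 2, e 3 - p, e 4] with hr
    have her : e = r + ![0,1,0,p,0] := by
      funext i; fin_cases i <;> simp [hr] <;> omega
    have he'' : r + ![1,0,0,0,p] = ![e 0 + 1, e 1 - 1, e 2, e 3 - p, e 4 + p] := by
      funext i; fin_cases i <;> simp [hr]
    have hK := move' (K_mem (k := k) (p := p) (m := m) hp hm) r
    rw [← her, he''] at hK
    have hΦe'' : Φ p ![e 0 + 1, e 1 - 1, e 2, e 3 - p, e 4 + p] = Φ p e' := by
      rw [← he'']
      calc Φ p (r + ![1,0,0,0,p]) = Φ p r + Φ p ![1,0,0,0,p] := Φ_add p r _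
        _ = Φ p r + Φ p ![0,1,0,p,0] := by rw [ΦK p m hp hm]
        _ = Φ p (r + ![0,1,0,p,0]) := (Φ_add p r _).symm
        _ = Φ p e := by rw [← her]
        _ = Φ p e' := hΦ
    have hrec := ih ![e 0 + 1, e 1 - 1, e 2, e 3 - p, e 4 + p] e' hΦe''
      (by simpa using h2) (by simp; omega)
    have hfin := (J k p m).add_mem hK hrec
    rwa [sub_add_sub_cancel] at hfin

lemma down_step {e' gL gR r : Fin 5 → ℕ} (hmem : mk k gL - mk k gR ∈ J k p m)
    (hΦg : Φ p gL = Φ p gR) (he' : e' = r + gL) (hlt : r 2 + gR 2 < e' 2) :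
    ∃ e'', (mk k e' - mk k e'' ∈ J k p m) ∧ Φ p e'' = Φ p e' ∧ e'' 2 < e' 2 := by
  refine ⟨r + gR, ?_, ?_, ?_⟩
  · rw [he']; exact move hmem r
  · rw [he', Φ_add, Φ_add, hΦg]
  · simpa using hlt

lemma down (hp : p = 2*m+1) (hm : 2 ≤ m) (e e' : Fin 5 → ℕ)
    (hΦ : Φ p e = Φ p e') (hl : e 2 < e' 2) :
    ∃ e'', (mk k e' - mk k e'' ∈ J k p m) ∧ Φ p e'' = Φ p e' ∧ e'' 2 < e' 2 := by
  have hl1 : 1 ≤ e' 2 := by omega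
  by_cases hc1 : ∃ n, 1 ≤ n ∧ n ≤ m ∧ p - 2*n ≤ e' 3 ∧ n ≤ e' 2
  · obtain ⟨n, hn1, hnm, hα, hnl⟩ := hc1
    have hgf : mk k ![0,0,n,p-2*n,0] - mk k ![1,n-1,0,0,p-2*n] ∈ J k p m := by
      have h := gF_mem (k := k) (p := p) (m := m) hn1 hnm
      rwa [gF] at h
    exact down_step hgf (ΦgF p m hp hm hn1 hnm)
      (r := ![e' 0, e' 1, e' 2 - n, e' 3 - (p-2*n), e' 4])
      (by funext i; fin_cases i <;> simp <;> omega) (by simp; omega)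
  · by_cases hc2 : 2 ≤ e' 4
    · have hgg : mk k ![0,0,1,0,2] - mk k ![0,1,0,2,0] ∈ J k p m := gG_mem
      exact down_step hgg (ΦgG p m hp hm)
        (r := ![e' 0, e' 1, e' 2 - 1, e' 3, e' 4 - 2])
        (by funext i; fin_cases i <;> simp <;> omega) (by simp; omega)
    · by_cases hc3 : 1 ≤ e' 4 ∧ m+1 ≤ e' 2
      · have hgm : mk k ![0,0,m+1,0,1] - mk k ![1,m,0,1,0] ∈ J k p m := gM_mem
        exact down_step hgm (ΦgM p m hp hm)
          (r := ![e' 0, e' 1, e' 2 - (m+1), e' 3, e' 4 - 1])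
          (by funext i; fin_cases i <;> simp <;> omega) (by simp; omega)
      · by_cases hc4 : p ≤ e' 2
        · have hgp : mk k ![0,0,p,0,0] - mk k ![2,p-2,0,0,0] ∈ J k p m := gP_mem
          exact down_step hgp (ΦgP p m hp hm)
            (r := ![e' 0, e' 1, e' 2 - p, e' 3, e' 4])
            (by funext i; fin_cases i <;> simp <;> omega) (by simp; omega)
        · exfalso
          push_neg at hc1 hc3 hc4
          have hβ : e' 4 ≤ 1 := by omega
          have ht := congrFun hΦ 0
          have ha1 := congrFun hΦ 1
          have ha2 := congrFun hΦ 2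
          simp only [Φ, Matrix.cons_val_zero, Matrix.cons_val_one, Matrix.head_cons,
            Matrix.cons_val_two, Matrix.tail_cons] at ht ha1 ha2
          have hp2 : 2 ≤ p := by omega
          have htz : (e 0 : ℤ) + e 1 + e 2 = e' 0 + e' 1 + e' 2 := by exact_mod_cast ht
          have ha1z : (p:ℤ) * e 0 + 2 * e 2 + e 3 = (p:ℤ) * e' 0 + 2 * e' 2 + e' 3 := by
            exact_mod_cast ha1
          have ha2z : (p:ℤ) * e 1 + ((p:ℤ) - 2) * e 2 + e 4
              = (p:ℤ) * e' 1 + ((p:ℤ) - 2) * e' 2 + e' 4 := by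
            zify [hp2] at ha2; linarith [ha2]
          set S : ℤ := (e 0 : ℤ) - e' 0 with hS
          set D : ℤ := (e' 2 : ℤ) - e 2 with hD
          have hD1 : 1 ≤ D := by simp only [hD]; omega
          have key1 : (p:ℤ) * S = 2*D + e' 3 - e 3 := by
            simp only [hS, hD]; linear_combination ha1z
          have key2 : (p:ℤ) * S = 2*D + e 4 - e' 4 := by
            simp only [hS, hD]; linear_combination (p:ℤ)*htz - ha2z
          have hβz : (e' 4 : ℤ) ≤ 1 := by exact_mod_cast hβ
          have hS1 : 1 ≤ S := by
            rcases le_or_gt S 0 with h | h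
            · exfalso
              have : (p:ℤ) * S ≤ 0 :=
                mul_nonpos_iff.mpr (Or.inl ⟨by positivity, h⟩)
              have he4 : (0:ℤ) ≤ e 4 := by positivity
              linarith
            · exact h
          have hpS : (p:ℤ) ≤ (p:ℤ) * S := le_mul_of_one_le_right (by positivity) hS1
          have hpz : (p:ℤ) = 2*(m:ℤ)+1 := by exact_mod_cast hp
          rcases le_or_gt (e' 2) m with hcase | hcase
          · -- e' 2 ≤ m : take n = e' 2
            have hα : e' 3 < p - 2 * e' 2 := by
              by_contra hcon
              push_neg at hcon
              exact absurd (hc1 (e' 2) (by omega) (by omega) hcon) (by omega)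
            have hαz : (e' 3 : ℤ) < (p:ℤ) - 2 * e' 2 := by
              zify [show 2 * e' 2 ≤ p by omega] at hα; linarith [hα]
            have hDe : D ≤ (e' 2 : ℤ) := by
              simp only [hD]; omega
            have he3 : (0:ℤ) ≤ e 3 := by positivity
            linarith
          · -- m < e' 2
            have hβ0 : e' 4 = 0 := by omega
            have hα0 : e' 3 = 0 := by
              have h1 : p - 2*m ≤ e' 3 → e' 2 < m := hc1 m (by omega) le_rfl
              omega
            have hps_le : (p:ℤ) * S ≤ 2*D := by
              have he3 : (0:ℤ) ≤ e 3 := by positivity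
              rw [key1]
              push_cast [hα0]
              linarith
            have hps_ge : 2*D ≤ (p:ℤ) * S := by
              have he4 : (0:ℤ) ≤ e 4 := by positivity
              rw [key2]
              push_cast [hβ0]
              linarith
            have hDp : D ≤ (e' 2 : ℤ) := by
              simp only [hD]; omega
            have he'2p : (e' 2 : ℤ) < (p : ℤ) := by exact_mod_cast hc4
            rcases (by omega : S = 1 ∨ 2 ≤ S) with hS' | hS'
            · rw [hS', mul_one] at hps_le hps_ge
              omega
            · have : (p:ℤ) * 2 ≤ (p:ℤ) * S :=
                mul_le_mul_of_nonneg_left hS' (by positivity)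
              linarith

lemma lemC (hp : p = 2*m+1) (hm : 2 ≤ m) :
    ∀ N (e e' : Fin 5 → ℕ), e 2 + e' 2 ≤ N → Φ p e = Φ p e' →
      mk k e - mk k e' ∈ J k p m := by
  intro N
  induction N with
  | zero =>
    intro e e' hN hΦ
    rcases le_total (e 0) (e' 0) with h | h
    · exact lemC1 (k := k) hp hm (e' 0 - e 0) e e' hΦ (by omega) (by omega)
    · have hrev := lemC1 (k := k) hp hm (e 0 - e' 0) e' e hΦ.symm (by omega) (by omega)
      have := (J k p m).neg_mem hrev
      rwa [neg_sub] at this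
  | succ N ih =>
    intro e e' hN hΦ
    rcases lt_trichotomy (e 2) (e' 2) with hl | hl | hl
    · obtain ⟨e'', hmem, hΦ'', hl''⟩ := down (k := k) hp hm e e' hΦ hl
      have h1 := ih e e'' (by omega) (hΦ.trans hΦ''.symm)
      have h2 := (J k p m).sub_mem h1 hmem
      have h3 : mk k e - mk k e'' - (mk k e' - mk k e'') = mk k e - mk k e' := by ring
      rwa [h3] at h2
    · rcases le_total (e 0) (e' 0) with h | h
      · exact lemC1 (k := k) hp hm (e' 0 - e 0) e e' hΦ hl (by omega)
      · have hrev := lemC1 (k := k) hp hm (e 0 - e' 0) e' e hΦ.symm hl.symm (by omega)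
        have := (J k p m).neg_mem hrev
        rwa [neg_sub] at this
    · obtain ⟨e'', hmem, hΦ'', hl''⟩ := down (k := k) hp hm e' e hΦ.symm hl
      have h1 := ih e'' e' (by omega) (hΦ''.trans hΦ)
      have h2 := (J k p m).add_mem hmem h1
      rwa [sub_add_sub_cancel] at h2

end LemC

section Ker
variable {p m : ℕ}

lemma F5_coe (d : Fin 5 →₀ ℕ) : F5 ⇑d = d := by ext i; simp [F5]

lemma J_le_ker (hp : p = 2*m+1) (hm : 2 ≤ m) :
    J k p m ≤ RingHom.ker (ψ k p).toRingHom := by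
  rw [J, Ideal.span_le]
  have hzero : ∀ gL gR : Fin 5 → ℕ, Φ p gL = Φ p gR → ψ k p (mk k gL - mk k gR) = 0 := by
    intro gL gR h
    rw [map_sub, ψ_mk, ψ_mk, h, sub_self]
  intro x hx
  simp only [S', Set.mem_union, Set.mem_insert_iff, Set.mem_singleton_iff,
    Set.mem_image, Set.mem_Icc] at hx
  have hxk : ψ k p x = 0 := by
    rcases hx with (rfl | rfl | rfl | rfl) | ⟨n, ⟨hn2, hnm⟩, rfl⟩
    · rw [gF]; exact hzero _ _ (ΦgF p m hp hm le_rfl (by omega))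
    · rw [gG]; exact hzero _ _ (ΦgG p m hp hm)
    · rw [gM]; exact hzero _ _ (ΦgM p m hp hm)
    · rw [gP]; exact hzero _ _ (ΦgP p m hp hm)
    · rw [gF]; exact hzero _ _ (ΦgF p m hp hm (by omega) hnm)
  exact hxk

lemma ker_le_J (hp : p = 2*m+1) (hm : 2 ≤ m) :
    RingHom.ker (ψ k p).toRingHom ≤ J k p m := by
  intro f hf
  rw [RingHom.mem_ker] at hf
  revert hf
  suffices H : ∀ c (f : MvPolynomial (Fin 5) k), f.support.card ≤ c →
      ψ k p f = 0 → f ∈ J k p m by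
    intro hf; exact H f.support.card f le_rfl hf
  intro c
  induction c with
  | zero =>
    intro f hc hψ
    have h0 : f = 0 := by
      rw [← support_eq_empty, ← Finset.card_eq_zero]; omega
    rw [h0]; exact (J k p m).zero_mem
  | succ c ih =>
    intro f hc hψ
    by_cases h0 : f = 0
    · rw [h0]; exact (J k p m).zero_mem
    obtain ⟨e₀, he₀⟩ := (support_nonempty.mpr h0)
    set F := f.support.filter (fun d : Fin 5 →₀ ℕ => Φ p ⇑d = Φ p ⇑e₀) with hF
    have hcoeff : ∀ q : Fin 3 → ℕ, coeff (F3 q) (ψ k p f) =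
        ∑ d ∈ f.support, if Φ p ⇑d = q then coeff d f else 0 := by
      intro q
      conv_lhs => rw [f.as_sum]
      rw [map_sum, MvPolynomial.coeff_sum]
      apply Finset.sum_congr rfl
      intro d _
      have hmon : monomial d (coeff d f) = C (coeff d f) * mk k ⇑d := by
        rw [mk, F5_coe, C_mul_monomial, mul_one]
      rw [hmon, map_mul, ψ_mk]
      have hC : ψ k p (C (coeff d f)) = C (coeff d f) := by
        have h := (ψ k p).commutes (coeff d f)
        rwa [algebraMap_eq, algebraMap_eq] at h
      rw [hC, mk3, coeff_C_mul, coeff_monomial]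
      by_cases hq : Φ p ⇑d = q
      · rw [if_pos hq, if_pos (by rw [hq]), mul_one]
      · rw [if_neg hq, if_neg (fun hcon => hq (F3_inj hcon)), mul_zero]
    have hsum0 : ∑ d ∈ F, coeff d f = 0 := by
      have h1 := hcoeff (Φ p ⇑e₀)
      rw [hψ, coeff_zero] at h1
      rw [hF, Finset.sum_filter]
      exact h1.symm
    have hdiff : ∀ d ∈ F, C (coeff d f) * (mk k ⇑d - mk k ⇑e₀) ∈ J k p m := by
      intro d hd
      exact Ideal.mul_mem_left _ _
        (lemC (k := k) hp hm (⇑d 2 + ⇑e₀ 2) _ _ le_rfl (Finset.mem_filter.mp hd).2)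
    have hJ : (∑ d ∈ F, C (coeff d f) * (mk k ⇑d - mk k ⇑e₀)) ∈ J k p m :=
      Ideal.sum_mem _ hdiff
    have hheq : (∑ d ∈ F, C (coeff d f) * (mk k ⇑d - mk k ⇑e₀))
        = ∑ d ∈ F, monomial d (coeff d f) := by
      simp only [mul_sub]
      rw [Finset.sum_sub_distrib, ← Finset.sum_mul, ← map_sum, hsum0, map_zero, zero_mul,
        sub_zero]
      apply Finset.sum_congr rfl
      intro d _
      rw [mk, F5_coe, C_mul_monomial, mul_one]
    set g := f - ∑ d ∈ F, monomial d (coeff d f) with hg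
    have hgψ : ψ k p g = 0 := by
      rw [hg, map_sub, hψ, ← hheq, zero_sub]
      have hz := J_le_ker (k := k) hp hm hJ
      rw [RingHom.mem_ker] at hz
      have hz' : ψ k p (∑ d ∈ F, C (coeff d f) * (mk k ⇑d - mk k ⇑e₀)) = 0 := hz
      rw [hz', neg_zero]
    have hgsupp : g.support ⊆ f.support \ F := by
      intro d hd
      have hcg : coeff d g = coeff d f - (if d ∈ F then coeff d f else 0) := by
        rw [hg, coeff_sub]
        congr 1
        rw [MvPolynomial.coeff_sum]
        simp_rw [coeff_monomial]
        exact Finset.sum_ite_eq' F d (fun d' => coeff d' f)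
      have hd' : coeff d g ≠ 0 := mem_support_iff.mp hd
      rw [Finset.mem_sdiff]
      by_cases hdf : d ∈ F
      · rw [hcg, if_pos hdf, sub_self] at hd'
        exact absurd rfl hd'
      · rw [hcg, if_neg hdf, sub_zero] at hd'
        exact ⟨mem_support_iff.mpr hd', hdf⟩
    have hFe : e₀ ∈ F := Finset.mem_filter.mpr ⟨he₀, rfl⟩
    have hcard : g.support.card ≤ c := by
      have h1 : g.support.card ≤ (f.support \ F).card := Finset.card_le_card hgsupp
      have h2 : (f.support \ F).card = f.support.card - F.card :=
        Finset.card_sdiff_of_subset (Finset.filter_subset _ _)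
      have h3 : 1 ≤ F.card := Finset.card_pos.mpr ⟨e₀, hFe⟩
      omega
    have hgJ := ih g hcard hgψ
    have hfg : f = g + ∑ d ∈ F, monomial d (coeff d f) := by rw [hg]; ring
    rw [hfg]
    exact (J k p m).add_mem hgJ (hheq ▸ hJ)

theorem kerψ_eq (hp : p = 2*m+1) (hm : 2 ≤ m) :
    RingHom.ker (ψ k p).toRingHom = J k p m :=
  le_antisymm (ker_le_J hp hm) (J_le_ker hp hm)

end Ker

end Stmt12

set_option maxHeartbeats 1000000
open MvPolynomial

/-- For `A = k[a₁,a₂]`, `p ≥ 5` odd, `x₁ = a₁^p`, `x₂ = a₂^p`,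
`y = a₁²a₂^{p-2}`, the kernel of `φ : A[X₁,X₂,Y] → A[t]`, `X₁ ↦ x₁t, X₂ ↦ x₂t, Y ↦ yt`,
is generated by `F₁ = a₁^{p-2}Y − a₂^{p-2}X₁`, `G₁ = a₂²Y − a₁²X₂`,
`Fₙ = a₁^{p-2n}Yⁿ − a₂^{p-2n}X₁X₂^{n-1}` for `2 ≤ n ≤ (p-1)/2`,
`F_{(p+1)/2} = a₂Y^{(p+1)/2} − a₁X₁X₂^{(p-1)/2}`, and `F_p = Y^p − X₁²X₂^{p-2}`.
(Here `X₁ = X 0`, `X₂ = X 1`, `Y = X 2`.) -/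
theorem stmt_12 {k : Type*} [Field k] (p : ℕ) (hp : 5 ≤ p) (hodd : Odd p) :
    let a₁ : MvPolynomial (Fin 2) k := MvPolynomial.X 0
    let a₂ : MvPolynomial (Fin 2) k := MvPolynomial.X 1
    let φ : MvPolynomial (Fin 3) (MvPolynomial (Fin 2) k) →ₐ[MvPolynomial (Fin 2) k]
        Polynomial (MvPolynomial (Fin 2) k) :=
      MvPolynomial.aeval ![Polynomial.C (a₁ ^ p) * Polynomial.X,
        Polynomial.C (a₂ ^ p) * Polynomial.X,
        Polynomial.C (a₁ ^ 2 * a₂ ^ (p - 2)) * Polynomial.X]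
    RingHom.ker φ = Ideal.span
      ({MvPolynomial.C (a₁ ^ (p - 2)) * MvPolynomial.X 2
          - MvPolynomial.C (a₂ ^ (p - 2)) * MvPolynomial.X 0,
        MvPolynomial.C (a₂ ^ 2) * MvPolynomial.X 2
          - MvPolynomial.C (a₁ ^ 2) * MvPolynomial.X 1,
        MvPolynomial.C a₂ * MvPolynomial.X 2 ^ ((p + 1) / 2)
          - MvPolynomial.C a₁ * (MvPolynomial.X 0 * MvPolynomial.X 1 ^ ((p - 1) / 2)),
        MvPolynomial.X 2 ^ p - MvPolynomial.X 0 ^ 2 * MvPolynomial.X 1 ^ (p - 2)} ∪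
        (fun n => MvPolynomial.C (a₁ ^ (p - 2 * n)) * MvPolynomial.X 2 ^ n
          - MvPolynomial.C (a₂ ^ (p - 2 * n))
            * (MvPolynomial.X 0 * MvPolynomial.X 1 ^ (n - 1))) ''
          Set.Icc 2 ((p - 1) / 2)) := by
  intro a₁ a₂ φ
  obtain ⟨m, hpm⟩ := hodd
  have hp2 : p = 2*m+1 := by omega
  have hm : 2 ≤ m := by omega
  classical
  set ι : MvPolynomial (Fin 5) k ≃ₐ[k] MvPolynomial (Fin 3) (MvPolynomial (Fin 2) k) :=
    (MvPolynomial.renameEquiv k (finSumFinEquiv (m := 3) (n := 2)).symm).trans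
      (MvPolynomial.sumAlgEquiv k (Fin 3) (Fin 2)) with hιdef
  set τ : MvPolynomial (Fin 3) k ≃ₐ[k] Polynomial (MvPolynomial (Fin 2) k) :=
    MvPolynomial.finSuccEquiv k 2 with hτdef
  have hsym0 : (finSumFinEquiv (m := 3) (n := 2)).symm 0 = Sum.inl 0 := by decide
  have hsym1 : (finSumFinEquiv (m := 3) (n := 2)).symm 1 = Sum.inl 1 := by decide
  have hsym2 : (finSumFinEquiv (m := 3) (n := 2)).symm 2 = Sum.inl 2 := by decide
  have hsym3 : (finSumFinEquiv (m := 3) (n := 2)).symm 3 = Sum.inr 0 := by decide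
  have hsym4 : (finSumFinEquiv (m := 3) (n := 2)).symm 4 = Sum.inr 1 := by decide
  have hι0 : ι (X 0) = X 0 := by
    simp [hιdef, rename_X, hsym0, sumToIter_Xl]
  have hι1 : ι (X 1) = X 1 := by
    simp [hιdef, rename_X, hsym1, sumToIter_Xl]
  have hι2 : ι (X 2) = X 2 := by
    simp [hιdef, rename_X, hsym2, sumToIter_Xl]
  have hι3 : ι (X 3) = C a₁ := by
    simp [hιdef, rename_X, hsym3, sumToIter_Xr, a₁]
  have hι4 : ι (X 4) = C a₂ := by
    simp [hιdef, rename_X, hsym4, sumToIter_Xr, a₂]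
  have hτ0 : τ (X 0) = Polynomial.X := by
    simp [hτdef, finSuccEquiv_X_zero]
  have hτ1 : τ (X 1) = Polynomial.C a₁ := by
    have h : (X 1 : MvPolynomial (Fin 3) k) = X (Fin.succ 0) := rfl
    rw [h, hτdef, finSuccEquiv_X_succ]
  have hτ2 : τ (X 2) = Polynomial.C a₂ := by
    have h : (X 2 : MvPolynomial (Fin 3) k) = X (Fin.succ 1) := rfl
    rw [h, hτdef, finSuccEquiv_X_succ]
  have hψ0 : Stmt12.ψ k p (X 0) = X 1 ^ p * X 0 := by simp [Stmt12.ψ]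
  have hψ1 : Stmt12.ψ k p (X 1) = X 2 ^ p * X 0 := by simp [Stmt12.ψ]
  have hψ2 : Stmt12.ψ k p (X 2) = X 0 * X 1 ^ 2 * X 2 ^ (p-2) := by simp [Stmt12.ψ]
  have hψ3 : Stmt12.ψ k p (X 3) = X 1 := by simp [Stmt12.ψ]
  have hψ4 : Stmt12.ψ k p (X 4) = X 2 := by simp [Stmt12.ψ]
  have hφ0 : φ (X 0) = Polynomial.C (a₁ ^ p) * Polynomial.X := by simp [φ]
  have hφ1 : φ (X 1) = Polynomial.C (a₂ ^ p) * Polynomial.X := by simp [φ]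
  have hφ2 : φ (X 2) = Polynomial.C (a₁ ^ 2 * a₂ ^ (p - 2)) * Polynomial.X := by simp [φ]
  have hψτ : (φ.restrictScalars k).comp ι.toAlgHom
      = (τ.toAlgHom).comp (Stmt12.ψ k p) := by
    apply MvPolynomial.algHom_ext
    intro i
    fin_cases i
    · show φ (ι (X 0)) = τ (Stmt12.ψ k p (X 0))
      rw [hι0, hψ0, map_mul, map_pow, hτ1, hτ0, hφ0, Polynomial.C_pow]
    · show φ (ι (X 1)) = τ (Stmt12.ψ k p (X 1))
      rw [hι1, hψ1, map_mul, map_pow, hτ2, hτ0, hφ1, Polynomial.C_pow]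
    · show φ (ι (X 2)) = τ (Stmt12.ψ k p (X 2))
      rw [hι2, hψ2, map_mul, map_mul, map_pow, map_pow, hτ0, hτ1, hτ2, hφ2,
        Polynomial.C_mul, Polynomial.C_pow, Polynomial.C_pow]
      ring
    · show φ (ι (X 3)) = τ (Stmt12.ψ k p (X 3))
      rw [hι3, hψ3, hτ1]
      have h := φ.commutes a₁
      rwa [algebraMap_eq] at h
    · show φ (ι (X 4)) = τ (Stmt12.ψ k p (X 4))
      rw [hι4, hψ4, hτ2]
      have h := φ.commutes a₂
      rwa [algebraMap_eq] at h
  have hφι : ∀ g : MvPolynomial (Fin 5) k, φ (ι g) = τ (Stmt12.ψ k p g) := by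
    intro g
    have h := AlgHom.congr_fun hψτ g
    simpa using h
  have key := Stmt12.kerψ_eq (k := k) hp2 hm
  have key2 : ∀ g : MvPolynomial (Fin 5) k,
      φ (ι g) = 0 ↔ g ∈ Ideal.span (Stmt12.S' k p m) := by
    intro g
    rw [hφι]
    constructor
    · intro h
      have h0 : Stmt12.ψ k p g = 0 := by
        apply τ.injective
        rw [h, map_zero]
      have h1 : g ∈ RingHom.ker (Stmt12.ψ k p).toRingHom := h0
      rw [key, Stmt12.J] at h1
      exact h1
    · intro h
      have h1 : g ∈ RingHom.ker (Stmt12.ψ k p).toRingHom := by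
        rw [key, Stmt12.J]; exact h
      have h0 : Stmt12.ψ k p g = 0 := h1
      rw [h0, map_zero]
  -- image of the generators
  have hgen : ∀ v : Fin 5 → ℕ, ι (Stmt12.mk k v)
      = C (a₁ ^ v 3 * a₂ ^ v 4) * (X 0 ^ v 0 * X 1 ^ v 1 * X 2 ^ v 2) := by
    intro v
    rw [Stmt12.mk_eq_prod]
    simp only [map_mul, map_pow, hι0, hι1, hι2, hι3, hι4, C_mul, C_pow]
    ring
  have hm2 : (p - 1) / 2 = m := by omega
  have hm1 : (p + 1) / 2 = m + 1 := by omega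
  have e1 : ι (Stmt12.gF k p 1) = C (a₁ ^ (p - 2)) * X 2 - C (a₂ ^ (p - 2)) * X 0 := by
    rw [Stmt12.gF, map_sub, hgen, hgen]
    norm_num [Matrix.cons_val_two, Matrix.cons_val_three, Matrix.cons_val_four]
  have e2 : ι (Stmt12.gG k) = C (a₂ ^ 2) * X 2 - C (a₁ ^ 2) * X 1 := by
    rw [Stmt12.gG, map_sub, hgen, hgen]
    norm_num [Matrix.cons_val_two, Matrix.cons_val_three, Matrix.cons_val_four]
  have e3 : ι (Stmt12.gM k m) = C a₂ * X 2 ^ ((p + 1) / 2)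
      - C a₁ * (X 0 * X 1 ^ ((p - 1) / 2)) := by
    rw [Stmt12.gM, map_sub, hgen, hgen, hm1, hm2]
    norm_num [Matrix.cons_val_two, Matrix.cons_val_three, Matrix.cons_val_four]
  have e4 : ι (Stmt12.gP k p) = X 2 ^ p - X 0 ^ 2 * X 1 ^ (p - 2) := by
    rw [Stmt12.gP, map_sub, hgen, hgen]
    norm_num [Matrix.cons_val_two, Matrix.cons_val_three, Matrix.cons_val_four]
  have himg : ι '' (Stmt12.S' k p m) =
      ({C (a₁ ^ (p - 2)) * X 2 - C (a₂ ^ (p - 2)) * X 0,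
        C (a₂ ^ 2) * X 2 - C (a₁ ^ 2) * X 1,
        C a₂ * X 2 ^ ((p + 1) / 2) - C a₁ * (X 0 * X 1 ^ ((p - 1) / 2)),
        X 2 ^ p - X 0 ^ 2 * X 1 ^ (p - 2)} ∪
        (fun n => C (a₁ ^ (p - 2 * n)) * X 2 ^ n
          - C (a₂ ^ (p - 2 * n)) * (X 0 * X 1 ^ (n - 1))) ''
          Set.Icc 2 ((p - 1) / 2) :
        Set (MvPolynomial (Fin 3) (MvPolynomial (Fin 2) k))) := by
    rw [Stmt12.S', Set.image_union, Set.image_insert_eq, Set.image_insert_eq,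
      Set.image_insert_eq, Set.image_singleton, Set.image_image]
    rw [e1, e2, e3, e4]
    congr 1
    rw [hm2]
    apply Set.image_congr
    intro n hn
    rw [Set.mem_Icc] at hn
    rw [Stmt12.gF, map_sub, hgen, hgen]
    norm_num [Matrix.cons_val_two, Matrix.cons_val_three, Matrix.cons_val_four]
  have hspan : Ideal.span
      ({C (a₁ ^ (p - 2)) * X 2 - C (a₂ ^ (p - 2)) * X 0,
        C (a₂ ^ 2) * X 2 - C (a₁ ^ 2) * X 1,
        C a₂ * X 2 ^ ((p + 1) / 2) - C a₁ * (X 0 * X 1 ^ ((p - 1) / 2)),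
        X 2 ^ p - X 0 ^ 2 * X 1 ^ (p - 2)} ∪
        (fun n => C (a₁ ^ (p - 2 * n)) * X 2 ^ n
          - C (a₂ ^ (p - 2 * n)) * (X 0 * X 1 ^ (n - 1))) ''
          Set.Icc 2 ((p - 1) / 2) :
        Set (MvPolynomial (Fin 3) (MvPolynomial (Fin 2) k)))
      = Ideal.map ι (Ideal.span (Stmt12.S' k p m)) := by
    rw [Ideal.map_span, himg]
  ext x
  rw [RingHom.mem_ker]
  constructor
  · intro h
    have h2 : φ (ι (ι.symm x)) = 0 := by rw [ι.apply_symm_apply]; exact h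
    have h3 := (key2 _).mp h2
    have h4 := Ideal.mem_map_of_mem ι h3
    rw [ι.apply_symm_apply] at h4
    rw [hspan]
    exact h4
  · intro h
    have himg2 : ι.symm '' ({C (a₁ ^ (p - 2)) * X 2 - C (a₂ ^ (p - 2)) * X 0,
        C (a₂ ^ 2) * X 2 - C (a₁ ^ 2) * X 1,
        C a₂ * X 2 ^ ((p + 1) / 2) - C a₁ * (X 0 * X 1 ^ ((p - 1) / 2)),
        X 2 ^ p - X 0 ^ 2 * X 1 ^ (p - 2)} ∪
        (fun n => C (a₁ ^ (p - 2 * n)) * X 2 ^ n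
          - C (a₂ ^ (p - 2 * n)) * (X 0 * X 1 ^ (n - 1))) ''
          Set.Icc 2 ((p - 1) / 2) :
        Set (MvPolynomial (Fin 3) (MvPolynomial (Fin 2) k))) = Stmt12.S' k p m := by
      rw [← himg, Set.image_image]
      simp only [AlgEquiv.symm_apply_apply, Set.image_id']
    have hspan2 : Ideal.span (Stmt12.S' k p m) = Ideal.map ι.symm
        (Ideal.span (({C (a₁ ^ (p - 2)) * X 2 - C (a₂ ^ (p - 2)) * X 0,
        C (a₂ ^ 2) * X 2 - C (a₁ ^ 2) * X 1,
        C a₂ * X 2 ^ ((p + 1) / 2) - C a₁ * (X 0 * X 1 ^ ((p - 1) / 2)),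
        X 2 ^ p - X 0 ^ 2 * X 1 ^ (p - 2)} ∪
        (fun n => C (a₁ ^ (p - 2 * n)) * X 2 ^ n
          - C (a₂ ^ (p - 2 * n)) * (X 0 * X 1 ^ (n - 1))) ''
          Set.Icc 2 ((p - 1) / 2) :
        Set (MvPolynomial (Fin 3) (MvPolynomial (Fin 2) k))))) := by
      rw [Ideal.map_span, himg2]
    have h2 := Ideal.mem_map_of_mem ι.symm h
    rw [← hspan2] at h2
    have h4 := (key2 _).mpr h2
    rw [ι.apply_symm_apply] at h4
    exact h4
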